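/- Every strictly upper-triangular n×n complex matrix x with x² = 0 belongs to the conjugation orbit B·N_σ for exactly one involution σ of {1,…,n}. In other words, the variety of strictly upper-triangular matrices of square zero is the disjoint union over all involutions σ of the B-orbits B·N_σ. -/

import Mathlib

open Matrix

/-- A matrix is strictly upper-triangular. -/
def StrictUpper {n : ℕ} (x : Matrix (Fin n) (Fin n) ℂ) : Prop :=
  ∀ a b : Fin n, b ≤ a → x a b = 0

/-- A matrix is (weakly) upper-triangular. -/
def UpperTri {n : ℕ} (x : Matrix (Fin n) (Fin n) ℂ) : Prop :=
  ∀ a b : Fin n, b < a → x a b = 0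

/-- The orbit of a matrix under conjugation by invertible upper-triangular matrices. -/
def Borbit {n : ℕ} (x : Matrix (Fin n) (Fin n) ℂ) : Set (Matrix (Fin n) (Fin n) ℂ) :=
  {y | ∃ b : Matrix (Fin n) (Fin n) ℂ, IsUnit b ∧ UpperTri b ∧ y = b * x * b⁻¹}

/-- A permutation is an involution. -/
def IsInvol {n : ℕ} (σ : Equiv.Perm (Fin n)) : Prop := σ * σ = 1

/-- The strictly upper-triangular part `N_σ` of the permutation matrix of `σ`. -/
def Nmat {n : ℕ} (σ : Equiv.Perm (Fin n)) : Matrix (Fin n) (Fin n) ℂ :=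
  Matrix.of fun a b => if a < b ∧ σ a = b then (1 : ℂ) else 0

/-- The submatrix `π_{i,j}(x)` on rows and columns `i,…,j` (1-based), for `1 ≤ i ≤ j ≤ n`. -/
def blk {n : ℕ} (x : Matrix (Fin n) (Fin n) ℂ) (i j : ℕ)
    (h1 : 1 ≤ i) (h2 : i ≤ j) (h3 : j ≤ n) :
    Matrix (Fin (j + 1 - i)) (Fin (j + 1 - i)) ℂ :=
  Matrix.of fun a b =>
    x ⟨i - 1 + a.1, by have := a.2; omega⟩ ⟨i - 1 + b.1, by have := b.2; omega⟩

/-- The rank matrix of `N_σ` (1-based indices, 0 outside the range `1 ≤ i < j ≤ n`). -/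
noncomputable def Rfun {n : ℕ} (σ : Equiv.Perm (Fin n)) : ℕ → ℕ → ℕ := fun i j =>
  if h : 1 ≤ i ∧ i < j ∧ j ≤ n then (blk (Nmat σ) i j h.1 h.2.1.le h.2.2).rank
  else 0

/-- The number of two-cycles of an involution. -/
def numCycles {n : ℕ} (σ : Equiv.Perm (Fin n)) : ℕ :=
  (Finset.univ.filter fun a : Fin n => a < σ a).card

/-- Evaluation of a polynomial in the matrix entries at a matrix. -/
noncomputable def evalMat {n : ℕ} (x : Matrix (Fin n) (Fin n) ℂ)
    (f : MvPolynomial (Fin n × Fin n) ℂ) : ℂ :=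
  MvPolynomial.eval (fun p => x p.1 p.2) f

/-- The vanishing ideal of a set of matrices. -/
noncomputable def vanishingIdeal {n : ℕ} (S : Set (Matrix (Fin n) (Fin n) ℂ)) :
    Ideal (MvPolynomial (Fin n × Fin n) ℂ) where
  carrier := {f | ∀ x ∈ S, evalMat x f = 0}
  add_mem' := by
    intro a b ha hb x hx
    simp only [evalMat, map_add] at *
    rw [ha x hx, hb x hx, add_zero]
  zero_mem' := by
    intro x hx
    simp [evalMat]
  smul_mem' := by
    intro c f hf x hx
    simp only [evalMat, smul_eq_mul, _root_.map_mul] at *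
    rw [hf x hx, mul_zero]

/-- The Zariski closure of a set of matrices: the common zero set of its vanishing ideal. -/
noncomputable def zclosure {n : ℕ} (S : Set (Matrix (Fin n) (Fin n) ℂ)) :
    Set (Matrix (Fin n) (Fin n) ℂ) :=
  {x | ∀ f ∈ vanishingIdeal S, evalMat x f = 0}

/-- The space of upper-triangular matrices commuting with a given matrix
(the Lie algebra of the stabilizer of `N` in `B`). -/
noncomputable def commUT {n : ℕ} (N : Matrix (Fin n) (Fin n) ℂ) :
    Submodule ℂ (Matrix (Fin n) (Fin n) ℂ) where
  carrier := {z | UpperTri z ∧ z * N = N * z}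
  add_mem' := by
    rintro a b ⟨ha1, ha2⟩ ⟨hb1, hb2⟩
    refine ⟨fun p q h => ?_, by rw [add_mul, mul_add, ha2, hb2]⟩
    simp [Matrix.add_apply, ha1 p q h, hb1 p q h]
  zero_mem' := ⟨fun p q h => rfl, by simp⟩
  smul_mem' := by
    rintro c a ⟨ha1, ha2⟩
    refine ⟨fun p q h => ?_, by rw [Matrix.smul_mul, Matrix.mul_smul, ha2]⟩
    simp [Matrix.smul_apply, ha1 p q h]


namespace Stmt0Aux
open Finset
open scoped ComplexOrder
variable {n : ℕ}


lemma upperTri_one : UpperTri (1 : Matrix (Fin n) (Fin n) ℂ) := by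
  intro a b h
  simp [Matrix.one_apply, h.ne']

lemma upperTri_mul {a b : Matrix (Fin n) (Fin n) ℂ} (ha : UpperTri a) (hb : UpperTri b) :
    UpperTri (a * b) := by
  intro p q h
  rw [Matrix.mul_apply]
  apply Finset.sum_eq_zero
  intro k _
  rcases lt_or_ge k p with hk | hk
  · rw [ha p k hk, zero_mul]
  · rw [hb k q (lt_of_lt_of_le h hk), mul_zero]

lemma strictUpper_mul_upperTri {a b : Matrix (Fin n) (Fin n) ℂ} (ha : StrictUpper a)
    (hb : UpperTri b) : StrictUpper (a * b) := by
  intro p q h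
  rw [Matrix.mul_apply]
  apply Finset.sum_eq_zero
  intro k _
  rcases le_or_gt k p with hk | hk
  · rw [ha p k hk, zero_mul]
  · rw [hb k q (lt_of_le_of_lt h hk), mul_zero]

lemma upperTri_mul_strictUpper {a b : Matrix (Fin n) (Fin n) ℂ} (ha : UpperTri a)
    (hb : StrictUpper b) : StrictUpper (a * b) := by
  intro p q h
  rw [Matrix.mul_apply]
  apply Finset.sum_eq_zero
  intro k _
  rcases lt_or_ge k p with hk | hk
  · rw [ha p k hk, zero_mul]
  · rw [hb k q (h.trans hk), mul_zero]

lemma upperTri_inv {c : Matrix (Fin n) (Fin n) ℂ} (hu : IsUnit c) (hc : UpperTri c) :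
    UpperTri c⁻¹ := by
  have hdet : IsUnit c.det := (Matrix.isUnit_iff_isUnit_det c).mp hu
  haveI := c.invertibleOfIsUnitDet hdet
  have : c.BlockTriangular (id : Fin n → Fin n) := fun i j h => hc i j h
  have h2 := Matrix.blockTriangular_inv_of_blockTriangular this
  intro a b h
  exact h2 h

lemma mul_inv_cancel' {c : Matrix (Fin n) (Fin n) ℂ} (hu : IsUnit c) : c * c⁻¹ = 1 :=
  Matrix.mul_nonsing_inv c ((Matrix.isUnit_iff_isUnit_det c).mp hu)

lemma inv_mul_cancel' {c : Matrix (Fin n) (Fin n) ℂ} (hu : IsUnit c) : c⁻¹ * c = 1 :=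
  Matrix.nonsing_inv_mul c ((Matrix.isUnit_iff_isUnit_det c).mp hu)

/-- The key relation: `Rel x y` means `y = c x c⁻¹` for some upper-triangular unit `c`. -/
def Rel (x y : Matrix (Fin n) (Fin n) ℂ) : Prop :=
  ∃ c : Matrix (Fin n) (Fin n) ℂ, IsUnit c ∧ UpperTri c ∧ c * x = y * c

lemma Rel.refl (x : Matrix (Fin n) (Fin n) ℂ) : Rel x x :=
  ⟨1, isUnit_one, upperTri_one, by simp⟩

lemma Rel.trans {x y z : Matrix (Fin n) (Fin n) ℂ} (h1 : Rel x y) (h2 : Rel y z) : Rel x z := by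
  obtain ⟨c, hc, hct, hcx⟩ := h1
  obtain ⟨d, hd, hdt, hdy⟩ := h2
  exact ⟨d * c, hd.mul hc, upperTri_mul hdt hct, by
    rw [mul_assoc, hcx, ← mul_assoc, hdy, mul_assoc]⟩

lemma Rel.symm {x y : Matrix (Fin n) (Fin n) ℂ} (h : Rel x y) : Rel y x := by
  obtain ⟨c, hc, hct, hcx⟩ := h
  have hdet : IsUnit c.det := (Matrix.isUnit_iff_isUnit_det c).mp hc
  refine ⟨c⁻¹, (Matrix.isUnit_iff_isUnit_det _).mpr (c.isUnit_nonsing_inv_det hdet),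
    upperTri_inv hc hct, ?_⟩
  calc c⁻¹ * y = c⁻¹ * y * (c * c⁻¹) := by rw [mul_inv_cancel' hc, mul_one]
    _ = c⁻¹ * (y * c) * c⁻¹ := by simp only [mul_assoc]
    _ = c⁻¹ * (c * x) * c⁻¹ := by rw [hcx]
    _ = x * c⁻¹ := by rw [← mul_assoc, inv_mul_cancel' hc, one_mul]

lemma Rel.eq_conj {x y : Matrix (Fin n) (Fin n) ℂ} (h : Rel x y) :
    ∃ b : Matrix (Fin n) (Fin n) ℂ, IsUnit b ∧ UpperTri b ∧ y = b * x * b⁻¹ := by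
  obtain ⟨c, hc, hct, hcx⟩ := h
  exact ⟨c, hc, hct, by rw [hcx, Matrix.mul_nonsing_inv_cancel_right _ _
    ((Matrix.isUnit_iff_isUnit_det c).mp hc)]⟩

lemma rel_of_conj {x : Matrix (Fin n) (Fin n) ℂ} {b : Matrix (Fin n) (Fin n) ℂ}
    (hb : IsUnit b) (hbt : UpperTri b) : Rel x (b * x * b⁻¹) :=
  ⟨b, hb, hbt, by rw [Matrix.nonsing_inv_mul_cancel_right _ _
    ((Matrix.isUnit_iff_isUnit_det b).mp hb)]⟩



/-- Embedding of a window `[i, j]` into `Fin n`. -/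
def emb (i j : Fin n) (a : Fin (j.1 - i.1 + 1)) : Fin n :=
  ⟨i.1 + a.1, by have := a.2; have := j.2; omega⟩

lemma emb_injective (i j : Fin n) : Function.Injective (emb i j) := by
  intro a b h
  have : i.1 + a.1 = i.1 + b.1 := congrArg Fin.val h
  exact Fin.ext (by omega)

/-- Principal contiguous block of a matrix. -/
def blkM (x : Matrix (Fin n) (Fin n) ℂ) (i j : Fin n) :
    Matrix (Fin (j.1 - i.1 + 1)) (Fin (j.1 - i.1 + 1)) ℂ :=
  x.submatrix (emb i j) (emb i j)

lemma blkM_mul {a b : Matrix (Fin n) (Fin n) ℂ} (ha : UpperTri a) (hb : UpperTri b)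
    (i j : Fin n) (hij : i.1 ≤ j.1) : blkM (a * b) i j = blkM a i j * blkM b i j := by
  ext p q
  show (a * b) (emb i j p) (emb i j q) = _
  rw [Matrix.mul_apply, Matrix.mul_apply]
  have hinj : ∀ x ∈ (univ : Finset (Fin (j.1 - i.1 + 1))), ∀ y ∈ univ,
      emb i j x = emb i j y → x = y := by intro x _ y _ h; exact emb_injective i j h
  calc ∑ k : Fin n, a (emb i j p) k * b k (emb i j q)
      = ∑ k ∈ univ.image (emb i j), a (emb i j p) k * b k (emb i j q) := ?_
    _ = ∑ r : Fin (j.1 - i.1 + 1), a (emb i j p) (emb i j r) * b (emb i j r) (emb i j q) :=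
        Finset.sum_image hinj
  symm
  apply Finset.sum_subset (Finset.subset_univ _)
  intro k _ hk
  have hk' : k.1 < i.1 ∨ j.1 < k.1 := by
    by_contra hc
    push_neg at hc
    exact hk (Finset.mem_image.mpr ⟨⟨k.1 - i.1, by omega⟩, Finset.mem_univ _,
      Fin.ext (by simp [emb]; omega)⟩)
  rcases hk' with hk' | hk'
  · rw [ha (emb i j p) k (by simp [emb, Fin.lt_def]; omega), zero_mul]
  · rw [hb k (emb i j q) (by simp [emb, Fin.lt_def]; have := q.2; omega), mul_zero]

lemma blkM_one (i j : Fin n) : blkM (1 : Matrix (Fin n) (Fin n) ℂ) i j = 1 := by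
  ext p q
  show (1 : Matrix (Fin n) (Fin n) ℂ) (emb i j p) (emb i j q) = _
  by_cases h : p = q
  · subst h; simp
  · rw [Matrix.one_apply_ne (fun hc => h (emb_injective i j hc)), Matrix.one_apply_ne h]

lemma blkM_rank_eq {x y c : Matrix (Fin n) (Fin n) ℂ} (hx : UpperTri x) (hy : UpperTri y)
    (hc : IsUnit c) (hct : UpperTri c) (hrel : c * x = y * c) (i j : Fin n) (hij : i.1 ≤ j.1) :
    (blkM x i j).rank = (blkM y i j).rank := by
  have hdet : IsUnit c.det := (Matrix.isUnit_iff_isUnit_det c).mp hc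
  have hcinvt : UpperTri c⁻¹ := by
    have hbt : c.BlockTriangular (id : Fin n → Fin n) := fun p q h => hct p q h
    haveI := c.invertibleOfIsUnitDet hdet
    intro p q h
    exact Matrix.blockTriangular_inv_of_blockTriangular hbt h
  have h1 : blkM c i j * blkM (c⁻¹) i j = 1 := by
    rw [← blkM_mul hct hcinvt _ _ hij, Matrix.mul_nonsing_inv c hdet, blkM_one]
  have h2 : blkM (c⁻¹) i j * blkM c i j = 1 := by
    rw [← blkM_mul hcinvt hct _ _ hij, Matrix.nonsing_inv_mul c hdet, blkM_one]
  have hud : IsUnit (blkM c i j).det := IsUnit.of_mul_eq_one (blkM c⁻¹ i j).det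
    (by rw [← Matrix.det_mul, h1, Matrix.det_one])
  calc (blkM x i j).rank = (blkM c i j * blkM x i j).rank :=
        (Matrix.rank_mul_eq_right_of_isUnit_det _ _ hud).symm
    _ = (blkM (c * x) i j).rank := by rw [blkM_mul hct hx _ _ hij]
    _ = (blkM (y * c) i j).rank := by rw [hrel]
    _ = (blkM y i j * blkM c i j).rank := by rw [blkM_mul hy hct _ _ hij]
    _ = (blkM y i j).rank := Matrix.rank_mul_eq_left_of_isUnit_det _ _ hud


/-- The counting function: number of 2-cycles of `σ` inside the window `[i, j]` (0-based). -/
def Fcnt (σ : Equiv.Perm (Fin n)) (i j : ℕ) : ℕ :=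
  (univ.filter fun c : Fin n => i ≤ c.1 ∧ c.1 < (σ c).1 ∧ (σ c).1 ≤ j).card

lemma upperTri_Nmat (σ : Equiv.Perm (Fin n)) : UpperTri (Nmat σ) := by
  intro a b h
  simp only [Nmat, Matrix.of_apply, ite_eq_right_iff, and_imp]
  intro h1 _
  exact absurd h1 (not_lt.mpr h.le)

lemma blkM_Nmat_mul_conjT (σ : Equiv.Perm (Fin n)) (i j : Fin n) :
    blkM (Nmat σ) i j * (blkM (Nmat σ) i j)ᴴ =
      Matrix.diagonal (fun p => if (emb i j p).1 < (σ (emb i j p)).1 ∧ (σ (emb i j p)).1 ≤ j.1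
        then (1 : ℂ) else 0) := by
  have happ : ∀ p r, blkM (Nmat σ) i j p r
      = if emb i j p < emb i j r ∧ σ (emb i j p) = emb i j r then (1 : ℂ) else 0 := by
    intro p r; rfl
  ext p q
  rw [Matrix.mul_apply, Matrix.diagonal_apply]
  have hterm : ∀ r, blkM (Nmat σ) i j p r * ((blkM (Nmat σ) i j)ᴴ) r q
      = if (emb i j p < emb i j r ∧ σ (emb i j p) = emb i j r) ∧
          (emb i j q < emb i j r ∧ σ (emb i j q) = emb i j r) then (1 : ℂ) else 0 := by
    intro r
    rw [Matrix.conjTranspose_apply, happ, happ]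
    by_cases h1 : emb i j p < emb i j r ∧ σ (emb i j p) = emb i j r <;>
      by_cases h2 : emb i j q < emb i j r ∧ σ (emb i j q) = emb i j r <;>
      simp [h1, h2]
  rw [Finset.sum_congr rfl (fun r _ => hterm r)]
  by_cases hpq : p = q
  · subst hpq
    rw [if_pos rfl]
    simp only [and_self]
    by_cases hcond : (emb i j p).1 < (σ (emb i j p)).1 ∧ (σ (emb i j p)).1 ≤ j.1
    · rw [if_pos hcond]
      have hi : i.1 ≤ (σ (emb i j p)).1 := by
        have : i.1 ≤ (emb i j p).1 := by simp [emb]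
        omega
      have hbd : (σ (emb i j p)).1 - i.1 < j.1 - i.1 + 1 := by omega
      set r0 : Fin (j.1 - i.1 + 1) := ⟨(σ (emb i j p)).1 - i.1, hbd⟩ with hr0
      have hembr0 : emb i j r0 = σ (emb i j p) := by
        apply Fin.ext
        show i.1 + ((σ (emb i j p)).1 - i.1) = (σ (emb i j p)).1
        omega
      have : ∀ r ∈ (univ : Finset (Fin (j.1 - i.1 + 1))),
          (if emb i j p < emb i j r ∧ σ (emb i j p) = emb i j r then (1 : ℂ) else 0)
          = if r = r0 then 1 else 0 := by
        intro r _
        by_cases hr : r = r0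
        · subst hr
          rw [if_pos rfl, if_pos ⟨by rw [hembr0]; exact Fin.lt_def.mpr hcond.1, hembr0.symm⟩]
        · rw [if_neg hr, if_neg]
          rintro ⟨-, h2⟩
          exact hr (emb_injective i j (by rw [← h2, hembr0]))
      rw [Finset.sum_congr rfl this, Finset.sum_ite_eq' univ r0]
      simp
    · rw [if_neg hcond]
      apply Finset.sum_eq_zero
      intro r _
      rw [if_neg]
      rintro ⟨h1, h2⟩
      apply hcond
      constructor
      · rw [h2]; exact Fin.lt_def.mp h1
      · rw [h2]
        show i.1 + r.1 ≤ j.1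
        have hp2 := p.2
        have hr2 := r.2
        have hpr : i.1 + p.1 < i.1 + r.1 := h1
        omega
  · rw [if_neg hpq]
    apply Finset.sum_eq_zero
    intro r _
    rw [if_neg]
    rintro ⟨⟨-, h1⟩, ⟨-, h2⟩⟩
    exact hpq (emb_injective i j (σ.injective (h1.trans h2.symm)))

lemma rank_blkM_Nmat (σ : Equiv.Perm (Fin n)) (i j : Fin n) :
    (blkM (Nmat σ) i j).rank = Fcnt σ i.1 j.1 := by
  classical
  rw [← Matrix.rank_self_mul_conjTranspose, blkM_Nmat_mul_conjT, Matrix.rank_diagonal,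
    Fintype.card_subtype]
  apply Finset.card_bij (fun p _ => emb i j p)
  · intro p hp
    simp only [Finset.mem_filter, Finset.mem_univ, true_and] at hp ⊢
    rw [ite_ne_right_iff] at hp
    exact ⟨by simp [emb], hp.1.1, hp.1.2⟩
  · intro p hp q hq h
    exact emb_injective i j h
  · intro c hc
    simp only [Finset.mem_filter, Finset.mem_univ, true_and] at hc
    have hcj : c.1 ≤ j.1 := by omega
    refine ⟨⟨c.1 - i.1, by omega⟩, ?_, Fin.ext (by simp [emb]; omega)⟩
    simp only [Finset.mem_filter, Finset.mem_univ, true_and, ite_ne_right_iff]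
    have hembc : emb i j ⟨c.1 - i.1, by omega⟩ = c := Fin.ext (by simp [emb]; omega)
    rw [hembc]
    exact ⟨⟨hc.2.1, hc.2.2⟩, one_ne_zero⟩


lemma Fcnt_eq_zero_of_gt (σ : Equiv.Perm (Fin n)) {i j : ℕ} (h : j < i) : Fcnt σ i j = 0 := by
  rw [Fcnt, Finset.card_eq_zero]
  rw [Finset.filter_eq_empty_iff]
  intro c _
  omega

lemma Fcnt_key (σ : Equiv.Perm (Fin n)) {a b : Fin n} (hab : a.1 < b.1) :
    Fcnt σ a.1 b.1 + Fcnt σ (a.1 + 1) (b.1 - 1)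
      = Fcnt σ (a.1 + 1) b.1 + Fcnt σ a.1 (b.1 - 1) + (if σ a = b then 1 else 0) := by
  classical
  set S0 := univ.filter fun c : Fin n => a.1 ≤ c.1 ∧ c.1 < (σ c).1 ∧ (σ c).1 ≤ b.1 with hS0
  set S1 := univ.filter fun c : Fin n => a.1 + 1 ≤ c.1 ∧ c.1 < (σ c).1 ∧ (σ c).1 ≤ b.1 with hS1
  set S2 := univ.filter fun c : Fin n => a.1 ≤ c.1 ∧ c.1 < (σ c).1 ∧ (σ c).1 ≤ b.1 - 1 with hS2
  set S3 := univ.filter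
    fun c : Fin n => a.1 + 1 ≤ c.1 ∧ c.1 < (σ c).1 ∧ (σ c).1 ≤ b.1 - 1 with hS3
  have hsub : S1 ∪ S2 ⊆ S0 := by
    intro c hc
    rcases Finset.mem_union.mp hc with h | h <;>
      simp only [hS1, hS2, hS0, Finset.mem_filter, Finset.mem_univ, true_and] at h ⊢ <;> omega
  have hinter : S1 ∩ S2 = S3 := by
    ext c
    simp only [hS1, hS2, hS3, Finset.mem_inter, Finset.mem_filter, Finset.mem_univ, true_and]
    omega
  have hdiff : S0 \ (S1 ∪ S2) = if σ a = b then {a} else ∅ := by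
    ext c
    simp only [Finset.mem_sdiff, Finset.mem_union, hS0, hS1, hS2, Finset.mem_filter,
      Finset.mem_univ, true_and]
    constructor
    · rintro ⟨h0, hn⟩
      push_neg at hn
      have hca : c.1 = a.1 := by
        by_contra hne
        exact absurd (hn.1 (by omega) h0.2.1) (by omega)
      have hcb : (σ c).1 = b.1 := by
        by_contra hne
        exact absurd (hn.2 h0.1 h0.2.1) (by omega)
      have hc : c = a := Fin.ext hca
      subst hc
      rw [if_pos (Fin.ext hcb)]
      exact Finset.mem_singleton_self _
    · intro hc
      by_cases hσ : σ a = b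
      · rw [if_pos hσ] at hc
        have hc : c = a := Finset.mem_singleton.mp hc
        subst hc
        have hv : (σ c).1 = b.1 := congrArg Fin.val hσ
        refine ⟨⟨le_refl _, by omega, by omega⟩, ?_⟩
        push_neg
        exact ⟨fun h => absurd h (by omega), fun _ _ => by omega⟩
      · rw [if_neg hσ] at hc
        exact absurd hc (Finset.notMem_empty _)
  have e1 := Finset.card_sdiff_add_card_eq_card hsub
  have e2 := Finset.card_union_add_card_inter S1 S2
  rw [hinter] at e2
  have hcard : (S0 \ (S1 ∪ S2)).card = if σ a = b then 1 else 0 := by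
    rw [hdiff]; split <;> simp
  have h0 : Fcnt σ a.1 b.1 = S0.card := rfl
  have h1 : Fcnt σ (a.1 + 1) b.1 = S1.card := rfl
  have h2 : Fcnt σ a.1 (b.1 - 1) = S2.card := rfl
  have h3 : Fcnt σ (a.1 + 1) (b.1 - 1) = S3.card := rfl
  rw [h0, h1, h2, h3, ← hcard]
  omega

lemma pairs_eq (σ τ : Equiv.Perm (Fin n))
    (h : ∀ i j : Fin n, i.1 ≤ j.1 → Fcnt σ i.1 j.1 = Fcnt τ i.1 j.1)
    {a b : Fin n} (hab : a.1 < b.1) : σ a = b ↔ τ a = b := by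
  have hbn := b.2
  have k1 := Fcnt_key σ hab
  have k2 := Fcnt_key τ hab
  have e0 : Fcnt σ a.1 b.1 = Fcnt τ a.1 b.1 := h a b hab.le
  have e1 : Fcnt σ (a.1 + 1) b.1 = Fcnt τ (a.1 + 1) b.1 := h ⟨a.1 + 1, by omega⟩ b hab
  have e2 : Fcnt σ a.1 (b.1 - 1) = Fcnt τ a.1 (b.1 - 1) :=
    h a ⟨b.1 - 1, by omega⟩ (by simp; omega)
  have e3 : Fcnt σ (a.1 + 1) (b.1 - 1) = Fcnt τ (a.1 + 1) (b.1 - 1) := by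
    rcases le_or_gt (a.1 + 1) (b.1 - 1) with hle | hlt
    · exact h ⟨a.1 + 1, by omega⟩ ⟨b.1 - 1, by omega⟩ hle
    · rw [Fcnt_eq_zero_of_gt σ hlt, Fcnt_eq_zero_of_gt τ hlt]
  have : (if σ a = b then 1 else 0) = (if τ a = b then 1 else 0) := by omega
  by_cases h1 : σ a = b <;> by_cases h2 : τ a = b <;> simp [h1, h2] at this ⊢

lemma invol_apply {σ : Equiv.Perm (Fin n)} (hσ : IsInvol σ) (a : Fin n) : σ (σ a) = a := by
  have := congrArg (fun p : Equiv.Perm (Fin n) => p a) hσ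
  simpa using this

lemma invol_ext {σ τ : Equiv.Perm (Fin n)} (hσ : IsInvol σ) (hτ : IsInvol τ)
    (hp : ∀ a b : Fin n, a.1 < b.1 → (σ a = b ↔ τ a = b)) : σ = τ := by
  apply Equiv.ext
  intro a
  rcases Nat.lt_trichotomy a.1 ((σ a).1) with h | h | h
  · exact ((hp a (σ a) h).mp rfl).symm
  · have ha : σ a = a := Fin.ext h.symm
    rw [ha]
    by_contra hne
    rcases Nat.lt_trichotomy a.1 ((τ a).1) with h' | h' | h'
    · have := (hp a (τ a) h').mpr rfl
      rw [ha] at this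
      exact absurd (congrArg Fin.val this) (by omega)
    · exact hne (Fin.ext h'.symm).symm
    · have hτc : τ (τ a) = a := invol_apply hτ a
      have := (hp (τ a) a h').mpr hτc
      have h2 : τ a = σ a := by
        conv_lhs => rw [← invol_apply hσ (τ a), this]
      rw [ha] at h2
      exact absurd (congrArg Fin.val h2) (by omega)
  · have hσc : σ (σ a) = a := invol_apply hσ a
    have := (hp (σ a) a h).mp hσc
    have h2 := congrArg τ this
    rw [invol_apply hτ] at h2
    exact h2

/-! ### Lifting matrices by one row/column -/

/-- The `(n+1) × (n+1)` matrix `[[0, v], [0, N]]`. -/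
def lift0 (v : Fin n → ℂ) (N : Matrix (Fin n) (Fin n) ℂ) : Matrix (Fin (n+1)) (Fin (n+1)) ℂ :=
  Matrix.of fun i j =>
    Fin.cases (Fin.cases 0 v j) (fun i' => Fin.cases 0 (fun j' => N i' j') j) i

/-- The `(n+1) × (n+1)` matrix `[[1, 0], [0, c]]`. -/
def lift1 (c : Matrix (Fin n) (Fin n) ℂ) : Matrix (Fin (n+1)) (Fin (n+1)) ℂ :=
  Matrix.of fun i j =>
    Fin.cases (Fin.cases 1 (fun _ => 0) j) (fun i' => Fin.cases 0 (fun j' => c i' j') j) i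

@[simp] lemma lift0_zero_zero (v : Fin n → ℂ) (N : Matrix (Fin n) (Fin n) ℂ) :
    lift0 v N 0 0 = 0 := rfl
@[simp] lemma lift0_zero_succ (v : Fin n → ℂ) (N : Matrix (Fin n) (Fin n) ℂ) (j : Fin n) :
    lift0 v N 0 j.succ = v j := by simp [lift0]
@[simp] lemma lift0_succ_zero (v : Fin n → ℂ) (N : Matrix (Fin n) (Fin n) ℂ) (i : Fin n) :
    lift0 v N i.succ 0 = 0 := by simp [lift0]
@[simp] lemma lift0_succ_succ (v : Fin n → ℂ) (N : Matrix (Fin n) (Fin n) ℂ) (i j : Fin n) :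
    lift0 v N i.succ j.succ = N i j := by simp [lift0]
@[simp] lemma lift1_zero_zero (c : Matrix (Fin n) (Fin n) ℂ) : lift1 c 0 0 = 1 := rfl
@[simp] lemma lift1_zero_succ (c : Matrix (Fin n) (Fin n) ℂ) (j : Fin n) :
    lift1 c 0 j.succ = 0 := by simp [lift1]
@[simp] lemma lift1_succ_zero (c : Matrix (Fin n) (Fin n) ℂ) (i : Fin n) :
    lift1 c i.succ 0 = 0 := by simp [lift1]
@[simp] lemma lift1_succ_succ (c : Matrix (Fin n) (Fin n) ℂ) (i j : Fin n) :
    lift1 c i.succ j.succ = c i j := by simp [lift1]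

/-- Case analysis for proving equalities of `(n+1) × (n+1)` matrices. -/
lemma matrix_ext_cases {A B : Matrix (Fin (n+1)) (Fin (n+1)) ℂ}
    (h00 : A 0 0 = B 0 0) (h0s : ∀ j : Fin n, A 0 j.succ = B 0 j.succ)
    (hs0 : ∀ i : Fin n, A i.succ 0 = B i.succ 0)
    (hss : ∀ i j : Fin n, A i.succ j.succ = B i.succ j.succ) : A = B := by
  ext i j
  refine Fin.cases ?_ (fun i' => ?_) i <;> refine Fin.cases ?_ (fun j' => ?_) j
  · exact h00
  · exact h0s j'
  · exact hs0 i'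
  · exact hss i' j'

lemma lift0_mul (v w : Fin n → ℂ) (M N : Matrix (Fin n) (Fin n) ℂ) :
    lift0 v M * lift0 w N = lift0 (Matrix.vecMul v N) (M * N) := by
  apply matrix_ext_cases <;> intros <;>
    simp [Matrix.mul_apply, Fin.sum_univ_succ, Matrix.vecMul, dotProduct]

lemma lift1_mul_lift0 (c : Matrix (Fin n) (Fin n) ℂ) (v : Fin n → ℂ)
    (N : Matrix (Fin n) (Fin n) ℂ) : lift1 c * lift0 v N = lift0 v (c * N) := by
  apply matrix_ext_cases <;> intros <;>
    simp [Matrix.mul_apply, Fin.sum_univ_succ]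

lemma lift0_mul_lift1 (v : Fin n → ℂ) (N c : Matrix (Fin n) (Fin n) ℂ) :
    lift0 v N * lift1 c = lift0 (Matrix.vecMul v c) (N * c) := by
  apply matrix_ext_cases <;> intros <;>
    simp [Matrix.mul_apply, Fin.sum_univ_succ, Matrix.vecMul, dotProduct]

lemma lift1_mul (c d : Matrix (Fin n) (Fin n) ℂ) : lift1 c * lift1 d = lift1 (c * d) := by
  apply matrix_ext_cases <;> intros <;>
    simp [Matrix.mul_apply, Fin.sum_univ_succ]

lemma lift1_one : lift1 (1 : Matrix (Fin n) (Fin n) ℂ) = 1 := by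
  apply matrix_ext_cases <;> intros <;>
    simp [Matrix.one_apply, Fin.succ_ne_zero, (Fin.succ_ne_zero _).symm, Fin.succ_inj]

lemma lift1_isUnit {c : Matrix (Fin n) (Fin n) ℂ} (hc : IsUnit c) : IsUnit (lift1 c) := by
  have hdet : IsUnit c.det := (Matrix.isUnit_iff_isUnit_det c).mp hc
  exact ⟨⟨lift1 c, lift1 c⁻¹,
    by rw [lift1_mul, Matrix.mul_nonsing_inv c hdet, lift1_one],
    by rw [lift1_mul, Matrix.nonsing_inv_mul c hdet, lift1_one]⟩, rfl⟩

lemma lift1_upperTri {c : Matrix (Fin n) (Fin n) ℂ} (hc : UpperTri c) : UpperTri (lift1 c) := by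
  intro a b h
  rcases Fin.eq_zero_or_eq_succ a with rfl | ⟨i', rfl⟩
  · exact absurd h (Fin.not_lt_zero b)
  rcases Fin.eq_zero_or_eq_succ b with rfl | ⟨j', rfl⟩
  · simp
  · rw [lift1_succ_succ]
    exact hc i' j' (by simpa [Fin.succ_lt_succ_iff] using h)

lemma lift0_add (v w : Fin n → ℂ) (M N : Matrix (Fin n) (Fin n) ℂ) :
    lift0 v M + lift0 w N = lift0 (v + w) (M + N) := by
  apply matrix_ext_cases <;> intros <;> simp

lemma lift0_zero : lift0 (0 : Fin n → ℂ) (0 : Matrix (Fin n) (Fin n) ℂ) = 0 := by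
  apply matrix_ext_cases <;> intros <;> simp

/-! ### Shear matrices -/

/-- The shear matrix `[[1, w], [0, 1]]`. -/
def shear (w : Fin n → ℂ) : Matrix (Fin (n+1)) (Fin (n+1)) ℂ := 1 + lift0 w 0

lemma shear_mul (v w : Fin n → ℂ) : shear v * shear w = shear (v + w) := by
  have h0 : lift0 v 0 * lift0 w 0 = 0 := by
    rw [lift0_mul, Matrix.vecMul_zero, Matrix.mul_zero, lift0_zero]
  have hc : (1 + lift0 v (0 : Matrix (Fin n) (Fin n) ℂ)) * (1 + lift0 w 0)
      = 1 + (lift0 v 0 + lift0 w 0) + lift0 v 0 * lift0 w 0 := by noncomm_ring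
  rw [shear, shear, shear, hc, h0, add_zero, lift0_add, add_zero]

lemma shear_isUnit (w : Fin n → ℂ) : IsUnit (shear w) := by
  have h1 : shear w * shear (-w) = 1 := by rw [shear_mul, add_neg_cancel, shear, lift0_zero, add_zero]
  have h2 : shear (-w) * shear w = 1 := by rw [shear_mul, neg_add_cancel, shear, lift0_zero, add_zero]
  exact ⟨⟨shear w, shear (-w), h1, h2⟩, rfl⟩

lemma shear_upperTri (w : Fin n → ℂ) : UpperTri (shear w) := by
  intro a b h
  rcases Fin.eq_zero_or_eq_succ a with rfl | ⟨i', rfl⟩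
  · exact absurd h (Fin.not_lt_zero b)
  rcases Fin.eq_zero_or_eq_succ b with rfl | ⟨j', rfl⟩
  · simp [shear, Matrix.one_apply, Fin.succ_ne_zero]
  · have hne : i' ≠ j' := by
      have : j' < i' := by simpa [Fin.succ_lt_succ_iff] using h
      exact this.ne'
    simp [shear, Matrix.one_apply, Fin.succ_inj, hne]

lemma shear_mul_lift0 (ww v : Fin n → ℂ) (N : Matrix (Fin n) (Fin n) ℂ) :
    shear ww * lift0 v N = lift0 (v + Matrix.vecMul ww N) N := by
  rw [shear, add_mul, one_mul, lift0_mul, Matrix.zero_mul, lift0_add, add_zero]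

lemma lift0_mul_shear (v : Fin n → ℂ) (N : Matrix (Fin n) (Fin n) ℂ) (ww : Fin n → ℂ) :
    lift0 v N * shear ww = lift0 v N := by
  rw [shear, mul_add, mul_one, lift0_mul, Matrix.mul_zero, Matrix.vecMul_zero, lift0_zero,
    add_zero]


/-! ### Lifting involutions -/

/-- Extend an involution of `Fin n` to `Fin (n+1)` fixing `0`. -/
noncomputable def permLiftFix (σ' : Equiv.Perm (Fin n)) (hσ' : IsInvol σ') :
    Equiv.Perm (Fin (n+1)) :=
  Function.Involutive.toPerm (Fin.cases 0 (fun i => (σ' i).succ)) (by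
    intro a
    refine Fin.cases ?_ (fun i => ?_) a
    · simp
    · simp [invol_apply hσ'])

@[simp] lemma permLiftFix_zero (σ' : Equiv.Perm (Fin n)) (hσ' : IsInvol σ') :
    permLiftFix σ' hσ' 0 = 0 := rfl

@[simp] lemma permLiftFix_succ (σ' : Equiv.Perm (Fin n)) (hσ' : IsInvol σ') (i : Fin n) :
    permLiftFix σ' hσ' i.succ = (σ' i).succ := by
  simp [permLiftFix, Function.Involutive.toPerm]

lemma isInvol_toPerm {m : ℕ} {f : Fin m → Fin m} (hf : Function.Involutive f) :
    IsInvol (Function.Involutive.toPerm f hf) := by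
  apply Equiv.ext
  intro a
  rw [Equiv.Perm.mul_apply, Equiv.Perm.one_apply]
  exact hf a

lemma permLiftFix_invol (σ' : Equiv.Perm (Fin n)) (hσ' : IsInvol σ') :
    IsInvol (permLiftFix σ' hσ') := isInvol_toPerm _

lemma Nmat_permLiftFix (σ' : Equiv.Perm (Fin n)) (hσ' : IsInvol σ') :
    Nmat (permLiftFix σ' hσ') = lift0 0 (Nmat σ') := by
  apply matrix_ext_cases
  · simp [Nmat]
  · intro j
    simp [Nmat, (Fin.succ_ne_zero j).symm]
  · intro i
    simp only [Nmat, Matrix.of_apply, lift0_succ_zero]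
    rw [if_neg]
    rintro ⟨h, -⟩
    exact (Fin.not_lt_zero _) h
  · intro i j
    simp [Nmat, Fin.succ_lt_succ_iff, Fin.succ_inj]

/-- Extend an involution of `Fin n` to `Fin (n+1)` swapping `0` with `k.succ`,
where `k` is a fixed point of `σ'`. -/
noncomputable def permLiftSwap (σ' : Equiv.Perm (Fin n)) (hσ' : IsInvol σ') (k : Fin n)
    (hk : σ' k = k) : Equiv.Perm (Fin (n+1)) :=
  Function.Involutive.toPerm
    (Fin.cases k.succ (fun i => if i = k then 0 else (σ' i).succ)) (by
    intro a
    refine Fin.cases ?_ (fun i => ?_) a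
    · simp
    · by_cases hik : i = k
      · subst hik; simp
      · have hσik : σ' i ≠ k := by
          intro hc
          apply hik
          rw [← invol_apply hσ' i, hc, hk]
        simp [hik, hσik, invol_apply hσ'])

@[simp] lemma permLiftSwap_zero (σ' : Equiv.Perm (Fin n)) (hσ' : IsInvol σ') (k : Fin n)
    (hk : σ' k = k) : permLiftSwap σ' hσ' k hk 0 = k.succ := rfl

@[simp] lemma permLiftSwap_succ (σ' : Equiv.Perm (Fin n)) (hσ' : IsInvol σ') (k : Fin n)
    (hk : σ' k = k) (i : Fin n) :
    permLiftSwap σ' hσ' k hk i.succ = if i = k then 0 else (σ' i).succ := by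
  simp [permLiftSwap, Function.Involutive.toPerm]

lemma permLiftSwap_invol (σ' : Equiv.Perm (Fin n)) (hσ' : IsInvol σ') (k : Fin n)
    (hk : σ' k = k) : IsInvol (permLiftSwap σ' hσ' k hk) := isInvol_toPerm _

lemma Nmat_permLiftSwap (σ' : Equiv.Perm (Fin n)) (hσ' : IsInvol σ') (k : Fin n)
    (hk : σ' k = k) :
    Nmat (permLiftSwap σ' hσ' k hk) = lift0 (fun j => if j = k then 1 else 0) (Nmat σ') := by
  apply matrix_ext_cases
  · simp [Nmat]
  · intro j
    by_cases hjk : j = k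
    · subst hjk
      simp [Nmat, Fin.succ_pos]
    · have hne : k.succ ≠ j.succ := fun h => hjk (Fin.succ_inj.mp h).symm
      simp [Nmat, hjk, hne]
  · intro i
    simp only [Nmat, Matrix.of_apply, lift0_succ_zero]
    rw [if_neg]
    rintro ⟨h, -⟩
    exact (Fin.not_lt_zero _) h
  · intro i j
    by_cases hik : i = k
    · have h1 : permLiftSwap σ' hσ' k hk i.succ = 0 := by simp [hik]
      have hσi : σ' i = i := by rw [hik, hk]
      simp only [Nmat, Matrix.of_apply, lift0_succ_succ, h1]
      rw [if_neg (by rintro ⟨-, h3⟩; exact (Fin.succ_ne_zero j) h3.symm),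
        if_neg (by rintro ⟨h2, h3⟩; rw [hσi] at h3; exact h2.ne h3)]
    · simp only [Nmat, Matrix.of_apply, lift0_succ_succ, permLiftSwap_succ, if_neg hik]
      simp [Fin.succ_lt_succ_iff, Fin.succ_inj]


/-! ### The key first-row reduction -/

lemma vecMul_Nmat (σ' : Equiv.Perm (Fin n)) (hσ' : IsInvol σ') (u : Fin n → ℂ) (j : Fin n) :
    Matrix.vecMul u (Nmat σ') j = if σ' j < j then u (σ' j) else 0 := by
  rw [Matrix.vecMul, dotProduct]
  rcases lt_or_ge (σ' j) j with h | h
  · rw [if_pos h]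
    rw [Finset.sum_eq_single (σ' j)]
    · have : Nmat σ' (σ' j) j = 1 := by
        simp [Nmat, h, invol_apply hσ']
      rw [this, mul_one]
    · intro b _ hb
      have hcond : ¬(b < j ∧ σ' b = j) := by
        rintro ⟨-, h2⟩
        apply hb
        rw [← invol_apply hσ' b, h2]
      simp [Nmat, hcond]
    · simp
  · rw [if_neg (not_lt.mpr h)]
    apply Finset.sum_eq_zero
    intro b _
    have hcond : ¬(b < j ∧ σ' b = j) := by
      rintro ⟨h1, h2⟩
      rw [← h2] at h1
      rw [← h2, invol_apply hσ'] at h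
      exact absurd h1 (not_lt.mpr h)
    simp [Nmat, hcond]

lemma core (σ' : Equiv.Perm (Fin n)) (hσ' : IsInvol σ') (w : Fin n → ℂ)
    (hw : Matrix.vecMul w (Nmat σ') = 0) :
    ∃ σ : Equiv.Perm (Fin (n+1)), IsInvol σ ∧ Rel (lift0 w (Nmat σ')) (Nmat σ) := by
  classical
  set N := Nmat σ' with hN
  -- coordinates of `w` at smaller elements of 2-cycles vanish
  have hw' : ∀ a : Fin n, a < σ' a → w a = 0 := by
    intro a ha
    have h1 := congrFun hw (σ' a)
    rw [vecMul_Nmat σ' hσ' w (σ' a), if_pos (by rwa [invol_apply hσ']), invol_apply hσ'] at h1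
    exact h1
  set v2 : Fin n → ℂ := fun j => if σ' j < j then 0 else w j with hv2
  set ww : Fin n → ℂ := fun a => if a < σ' a then -w (σ' a) else 0 with hww
  -- Step 1: shear away the coordinates at larger elements of 2-cycles
  have hstep1 : Rel (lift0 w N) (lift0 v2 N) := by
    refine ⟨shear ww, shear_isUnit ww, shear_upperTri ww, ?_⟩
    rw [shear_mul_lift0, lift0_mul_shear]
    have hsum : w + Matrix.vecMul ww N = v2 := by
      funext j
      rw [Pi.add_apply, vecMul_Nmat σ' hσ' ww j]
      by_cases hcase : σ' j < j
      · rw [if_pos hcase]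
        have h2 : ww (σ' j) = -w j := by
          show (if σ' j < σ' (σ' j) then -w (σ' (σ' j)) else 0) = -w j
          rw [invol_apply hσ', if_pos hcase]
        rw [h2]
        show w j + -w j = if σ' j < j then 0 else w j
        rw [if_pos hcase, add_neg_cancel]
      · rw [if_neg hcase, add_zero]
        show w j = if σ' j < j then 0 else w j
        rw [if_neg hcase]
    rw [hsum]
  by_cases hzero : v2 = 0
  · -- Case 1 : nothing left on the first row
    refine ⟨permLiftFix σ' hσ', permLiftFix_invol σ' hσ', ?_⟩
    rw [Nmat_permLiftFix, ← hzero, ← hN]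
    exact hstep1
  · -- Case 2 : pick the smallest nonzero coordinate, necessarily a fixed point of σ'
    have hne : (univ.filter fun j => v2 j ≠ 0).Nonempty := by
      rcases Function.ne_iff.mp hzero with ⟨j, hj⟩
      exact ⟨j, Finset.mem_filter.mpr ⟨Finset.mem_univ _, hj⟩⟩
    set k := (univ.filter fun j => v2 j ≠ 0).min' hne with hkdef
    have hk : v2 k ≠ 0 := (Finset.mem_filter.mp ((univ.filter fun j => v2 j ≠ 0).min'_mem hne)).2
    have hmin : ∀ j, v2 j ≠ 0 → k ≤ j := fun j hj =>
      Finset.min'_le _ j (Finset.mem_filter.mpr ⟨Finset.mem_univ _, hj⟩)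
    have hlow : ∀ j, j < k → v2 j = 0 := by
      intro j hj
      by_contra hc
      exact absurd (hmin j hc) (not_le.mpr hj)
    have hnlt : ¬(σ' k < k) := by
      intro hc
      apply hk
      rw [hv2]
      simp [hc]
    have hfix : σ' k = k := by
      rcases lt_trichotomy (σ' k) k with h | h | h
      · exact absurd h hnlt
      · exact h
      · exfalso
        apply hk
        rw [hv2]
        simp only [if_neg hnlt]
        exact hw' k h
    -- the conjugating matrix for the middle block
    set h : Matrix (Fin n) (Fin n) ℂ :=
      Matrix.of (fun i j => if i = k then v2 j else if i = j then 1 else 0) with hhdef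
    have hut : UpperTri h := by
      intro a b hba
      show (if a = k then v2 b else if a = b then 1 else 0) = 0
      by_cases hak : a = k
      · rw [if_pos hak]
        apply hlow
        rw [← hak]
        exact hba
      · rw [if_neg hak, if_neg (fun hc => absurd hc hba.ne')]
    have hvN : Matrix.vecMul v2 N = 0 := by
      funext j
      rw [vecMul_Nmat σ' hσ' v2 j, Pi.zero_apply]
      by_cases hj : σ' j < j
      · rw [if_pos hj]
        show (if σ' (σ' j) < σ' j then 0 else w (σ' j)) = 0
        rw [if_neg (by rw [invol_apply hσ']; exact not_lt.mpr hj.le)]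
        exact hw' (σ' j) (by rwa [invol_apply hσ'])
      · rw [if_neg hj]
    have hNcolk : ∀ i : Fin n, N i k = 0 := by
      intro i
      show (if i < k ∧ σ' i = k then (1:ℂ) else 0) = 0
      rw [if_neg]
      rintro ⟨h1, h2⟩
      have hik : i = k := by rw [← invol_apply hσ' i, h2, hfix]
      exact h1.ne hik
    have hNrowk : ∀ j : Fin n, N k j = 0 := by
      intro j
      show (if k < j ∧ σ' k = j then (1:ℂ) else 0) = 0
      rw [if_neg]
      rintro ⟨h1, h2⟩
      rw [hfix] at h2
      exact h1.ne h2
    have hhN : h * N = N := by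
      ext i j
      rw [Matrix.mul_apply]
      by_cases hik : i = k
      · subst hik
        have hrow : ∀ a ∈ (univ : Finset (Fin n)), h k a * N a j = v2 a * N a j := by
          intro a _
          show (if k = k then v2 a else if k = a then 1 else 0) * N a j = _
          rw [if_pos rfl]
        rw [Finset.sum_congr rfl hrow]
        have hvm : ∑ a : Fin n, v2 a * N a j = Matrix.vecMul v2 N j := by
          simp [Matrix.vecMul, dotProduct]
        rw [hvm, hvN, Pi.zero_apply, hNrowk j]
      · rw [Finset.sum_eq_single i]
        · show (if i = k then v2 i else if i = i then 1 else 0) * N i j = N i j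
          rw [if_neg hik, if_pos rfl, one_mul]
        · intro b _ hbi
          show (if i = k then v2 b else if i = b then 1 else 0) * N b j = 0
          rw [if_neg hik, if_neg (fun hc => hbi hc.symm), zero_mul]
        · simp
    have hNh : N * h = N := by
      ext i j
      rw [Matrix.mul_apply]
      by_cases hjk : j = k
      · subst hjk
        have hz : ∀ b ∈ (univ : Finset (Fin n)), N i b * h b k = 0 := by
          intro b _
          show N i b * (if b = k then v2 k else if b = k then 1 else 0) = 0
          by_cases hbk : b = k
          · rw [hbk, hNcolk i, zero_mul]
          · rw [if_neg hbk, if_neg hbk, mul_zero]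
        rw [Finset.sum_eq_zero hz, hNcolk i]
      · rw [Finset.sum_eq_single j]
        · show N i j * (if j = k then v2 j else if j = j then 1 else 0) = N i j
          rw [if_neg hjk, if_pos rfl, mul_one]
        · intro b _ hbj
          show N i b * (if b = k then v2 j else if b = j then 1 else 0) = 0
          by_cases hbk : b = k
          · rw [hbk, hNcolk i, zero_mul]
          · rw [if_neg hbk, if_neg hbj, mul_zero]
        · simp
    have hhdiag : ∀ i : Fin n, h i i = if i = k then v2 k else 1 := by
      intro i
      show (if i = k then v2 i else if i = i then 1 else 0) = _
      by_cases hik : i = k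
      · rw [if_pos hik, if_pos hik, hik]
      · rw [if_neg hik, if_pos rfl, if_neg hik]
    have hdet : IsUnit h.det := by
      have hbt : h.BlockTriangular (id : Fin n → Fin n) := fun p q hpq => hut p q hpq
      rw [Matrix.det_of_upperTriangular hbt]
      have : ∏ i : Fin n, h i i = v2 k := by
        rw [Finset.prod_eq_single k]
        · rw [hhdiag k, if_pos rfl]
        · intro b _ hbk
          rw [hhdiag b, if_neg hbk]
        · simp
      rw [this]
      exact isUnit_iff_ne_zero.mpr hk
    have hunit : IsUnit h := (Matrix.isUnit_iff_isUnit_det h).mpr hdet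
    have hek : Matrix.vecMul (fun j => if j = k then (1:ℂ) else 0) h = v2 := by
      funext j
      rw [Matrix.vecMul, dotProduct]
      rw [Finset.sum_eq_single k]
      · show (if k = k then (1:ℂ) else 0) * h k j = v2 j
        rw [if_pos rfl, one_mul]
        show (if k = k then v2 j else _) = v2 j
        rw [if_pos rfl]
      · intro b _ hbk
        show (if b = k then (1:ℂ) else 0) * h b j = 0
        rw [if_neg hbk, zero_mul]
      · simp
    have hstep2 : Rel (lift0 v2 N) (lift0 (fun j => if j = k then (1:ℂ) else 0) N) := by
      refine ⟨lift1 h, lift1_isUnit hunit, lift1_upperTri hut, ?_⟩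
      rw [lift1_mul_lift0, lift0_mul_lift1, hhN, hNh, hek]
    refine ⟨permLiftSwap σ' hσ' k hfix, permLiftSwap_invol σ' hσ' k hfix, ?_⟩
    rw [Nmat_permLiftSwap σ' hσ' k hfix, ← hN]
    exact Rel.trans hstep1 hstep2


lemma exists_rel : ∀ {m : ℕ} (x : Matrix (Fin m) (Fin m) ℂ), StrictUpper x → x * x = 0 →
    ∃ σ : Equiv.Perm (Fin m), IsInvol σ ∧ Rel x (Nmat σ) := by
  intro m
  induction m with
  | zero =>
    intro x hx hx2
    refine ⟨1, by rw [IsInvol, mul_one], ?_⟩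
    have hx0 : x = Nmat 1 := by ext i j; exact i.elim0
    rw [hx0]
    exact ⟨1, isUnit_one, upperTri_one, by rw [one_mul, mul_one]⟩
  | succ n ih =>
    intro x hx hx2
    set x' : Matrix (Fin n) (Fin n) ℂ := x.submatrix Fin.succ Fin.succ with hx'def
    set v : Fin n → ℂ := fun j => x 0 j.succ with hvdef
    have hxeq : x = lift0 v x' := by
      apply matrix_ext_cases
      · rw [lift0_zero_zero]; exact hx 0 0 le_rfl
      · intro j; rw [lift0_zero_succ]
      · intro i; rw [lift0_succ_zero]; exact hx i.succ 0 (Fin.zero_le _)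
      · intro i j; rw [lift0_succ_succ]; rfl
    have hx2' : lift0 (Matrix.vecMul v x') (x' * x') = 0 := by
      rw [← lift0_mul, ← hxeq, hx2]
    have hstrict' : StrictUpper x' := fun a b hba =>
      hx a.succ b.succ (Fin.succ_le_succ_iff.mpr hba)
    have hsq' : x' * x' = 0 := by
      ext i j
      have hc := congrFun (congrFun hx2' i.succ) j.succ
      rwa [lift0_succ_succ, Matrix.zero_apply] at hc
    have hv' : Matrix.vecMul v x' = 0 := by
      funext j
      have hc := congrFun (congrFun hx2' 0) j.succ
      rwa [lift0_zero_succ, Matrix.zero_apply] at hc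
    obtain ⟨σ', hσ', c', hc'u, hc't, hc'⟩ := ih x' hstrict' hsq'
    have hdet' : IsUnit c'.det := (Matrix.isUnit_iff_isUnit_det c').mp hc'u
    set w : Fin n → ℂ := Matrix.vecMul v c'⁻¹ with hwdef
    have hrel1 : Rel x (lift0 w (Nmat σ')) := by
      refine ⟨lift1 c', lift1_isUnit hc'u, lift1_upperTri hc't, ?_⟩
      rw [hxeq, lift1_mul_lift0, lift0_mul_lift1, hc']
      rw [hwdef, Matrix.vecMul_vecMul, Matrix.nonsing_inv_mul c' hdet', Matrix.vecMul_one]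
    have hwN : Matrix.vecMul w (Nmat σ') = 0 := by
      rw [hwdef, Matrix.vecMul_vecMul]
      have hcom : c'⁻¹ * Nmat σ' = x' * c'⁻¹ := by
        calc c'⁻¹ * Nmat σ'
            = c'⁻¹ * Nmat σ' * (c' * c'⁻¹) := by
              rw [Matrix.mul_nonsing_inv c' hdet', mul_one]
          _ = c'⁻¹ * (Nmat σ' * c') * c'⁻¹ := by simp only [mul_assoc]
          _ = c'⁻¹ * (c' * x') * c'⁻¹ := by rw [hc']
          _ = c'⁻¹ * c' * (x' * c'⁻¹) := by simp only [mul_assoc]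
          _ = x' * c'⁻¹ := by rw [Matrix.nonsing_inv_mul c' hdet', one_mul]
      rw [hcom, ← Matrix.vecMul_vecMul, hv', Matrix.zero_vecMul]
    obtain ⟨σ, hσ, hrel2⟩ := core σ' hσ' w hwN
    exact ⟨σ, hσ, Rel.trans hrel1 hrel2⟩


lemma rel_Nmat_eq {σ τ : Equiv.Perm (Fin n)} (hσ : IsInvol σ) (hτ : IsInvol τ)
    (h : Rel (Nmat σ) (Nmat τ)) : σ = τ := by
  obtain ⟨c, hcu, hct, hrel⟩ := h
  have hF : ∀ i j : Fin n, i.1 ≤ j.1 → Fcnt σ i.1 j.1 = Fcnt τ i.1 j.1 := by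
    intro i j hij
    rw [← rank_blkM_Nmat σ i j, ← rank_blkM_Nmat τ i j]
    exact blkM_rank_eq (upperTri_Nmat σ) (upperTri_Nmat τ) hcu hct hrel i j hij
  exact invol_ext hσ hτ (fun a b hab => pairs_eq σ τ hF hab)

end Stmt0Aux

/-- every strictly upper-triangular `x` with `x² = 0` lies in `B·N_σ`
for exactly one involution `σ`. -/
theorem stmt0 (n : ℕ) (hn : 1 ≤ n) (x : Matrix (Fin n) (Fin n) ℂ)
    (hx : StrictUpper x) (hx2 : x * x = 0) :
    ∃! σ : Equiv.Perm (Fin n), IsInvol σ ∧ x ∈ Borbit (Nmat σ) := by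
  obtain ⟨σ, hσ, hrel⟩ := Stmt0Aux.exists_rel x hx hx2
  refine ⟨σ, ⟨hσ, ?_⟩, ?_⟩
  · exact Stmt0Aux.Rel.eq_conj (Stmt0Aux.Rel.symm hrel)
  · rintro τ ⟨hτ, b, hbu, hbt, hbe⟩
    have hrelτ : Stmt0Aux.Rel (Nmat τ) x := by
      rw [hbe]
      exact Stmt0Aux.rel_of_conj hbu hbt
    exact Stmt0Aux.rel_Nmat_eq hτ hσ
      (Stmt0Aux.Rel.trans hrelτ hrel)
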